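/- Second-moment bound on the PLRS noise: under the stated setup, E[‖w‖²] ≤ η_c² σ² + (L_max − L_min)² σ² / 12 + (L_max − L_min)² ‖∇f(x)‖² / 12. -/

import Mathlib

open MeasureTheory ProbabilityTheory

open scoped RealInnerProductSpace

/-- Integral of `φ ∘ u` when `u` is uniform on `Icc (-c) c`. -/
lemma unif_integral_comp {Ω : Type} [MeasurableSpace Ω] {μ : Measure Ω}
    {u : Ω → ℝ} {c : ℝ} (hc : 0 < c)
    (hu : pdf.IsUniform u (Set.Icc (-c) c) μ volume) (φ : ℝ → ℝ) (hφ : Continuous φ) :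
    ∫ ω, φ (u ω) ∂μ = (2 * c)⁻¹ * ∫ x in Set.Icc (-c) c, φ x := by
  have hvol : volume (Set.Icc (-c) c) = ENNReal.ofReal (2 * c) := by
    rw [Real.volume_Icc]; ring_nf
  have hne0 : volume (Set.Icc (-c) c) ≠ 0 := by
    rw [hvol]; simp [ENNReal.ofReal_eq_zero]; linarith
  have hnetop : volume (Set.Icc (-c) c) ≠ ⊤ := by rw [hvol]; exact ENNReal.ofReal_ne_top
  have ham : AEMeasurable u μ := hu.aemeasurable hne0 hnetop
  have : ∫ ω, φ (u ω) ∂μ = ∫ x, φ x ∂(Measure.map u μ) :=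
    (integral_map ham hφ.aestronglyMeasurable).symm
  rw [this, hu]
  rw [ProbabilityTheory.cond, integral_smul_measure, hvol, smul_eq_mul,
    ENNReal.toReal_inv, ENNReal.toReal_ofReal (by linarith)]

/-- Integrability of `φ ∘ u` when `u` is uniform on `Icc (-c) c`. -/
lemma unif_integrable_comp {Ω : Type} [MeasurableSpace Ω] {μ : Measure Ω}
    {u : Ω → ℝ} {c : ℝ} (hc : 0 < c)
    (hu : pdf.IsUniform u (Set.Icc (-c) c) μ volume) (φ : ℝ → ℝ) (hφ : Continuous φ) :
    Integrable (fun ω => φ (u ω)) μ := by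
  have hvol : volume (Set.Icc (-c) c) = ENNReal.ofReal (2 * c) := by
    rw [Real.volume_Icc]; ring_nf
  have hne0 : volume (Set.Icc (-c) c) ≠ 0 := by
    rw [hvol]; simp [ENNReal.ofReal_eq_zero]; linarith
  have hnetop : volume (Set.Icc (-c) c) ≠ ⊤ := by rw [hvol]; exact ENNReal.ofReal_ne_top
  have ham : AEMeasurable u μ := hu.aemeasurable hne0 hnetop
  have hmap : Integrable φ (Measure.map u μ) := by
    rw [hu, ProbabilityTheory.cond]
    refine Integrable.smul_measure ?_ (by simp [hvol]; positivity)
    exact (hφ.continuousOn.integrableOn_compact isCompact_Icc)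
  exact (integrable_map_measure hφ.aestronglyMeasurable ham).mp hmap

/-- **Second-moment bound on the PLRS noise.** With `ηc = (Lmin + Lmax)/2`, `u` uniform on
`[Lmin - ηc, Lmax - ηc]`, `g` a stochastic gradient of `f` at `x` independent of `u` with
mean `∇f(x)` and `E[‖g - ∇f(x)‖²] ≤ σ²`, the PLRS noise `w = ηc • g - ηc • ∇f(x) + u • g`
satisfies `E[‖w‖²] ≤ ηc² σ² + (Lmax - Lmin)² σ² / 12 + (Lmax - Lmin)² ‖∇f(x)‖² / 12`. -/
theorem plrs_noise_second_moment
    {Ω : Type} [MeasurableSpace Ω] (μ : Measure Ω) [IsProbabilityMeasure μ]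
    {d : ℕ} (f : EuclideanSpace ℝ (Fin d) → ℝ) (x : EuclideanSpace ℝ (Fin d))
    (Lmin Lmax ηc σ : ℝ)
    (hLmin : 0 < Lmin) (hLL : Lmin < Lmax) (hLmax : Lmax < 1)
    (hηc : ηc = (Lmin + Lmax) / 2)
    (u : Ω → ℝ) (g : Ω → EuclideanSpace ℝ (Fin d))
    (hu : pdf.IsUniform u (Set.Icc (Lmin - ηc) (Lmax - ηc)) μ volume)
    (hindep : IndepFun u g μ)
    (hg_int : Integrable g μ)
    (hg2_int : Integrable (fun ω => ‖g ω‖ ^ 2) μ)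
    (hg_mean : ∫ ω, g ω ∂μ = gradient f x)
    (hσ : ∫ ω, ‖g ω - gradient f x‖ ^ 2 ∂μ ≤ σ ^ 2) :
    ∫ ω, ‖ηc • g ω - ηc • gradient f x + u ω • g ω‖ ^ 2 ∂μ ≤
      ηc ^ 2 * σ ^ 2 + (Lmax - Lmin) ^ 2 * σ ^ 2 / 12
        + (Lmax - Lmin) ^ 2 * ‖gradient f x‖ ^ 2 / 12 := by
  set G := gradient f x with hG
  set c : ℝ := (Lmax - Lmin) / 2 with hcdef
  have hc : 0 < c := by simp [hcdef]; linarith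
  have hset : Set.Icc (Lmin - ηc) (Lmax - ηc) = Set.Icc (-c) c := by
    rw [hηc, hcdef]; congr 1 <;> ring
  rw [hset] at hu
  -- moments of u
  have hEu : ∫ ω, u ω ∂μ = 0 := by
    have := unif_integral_comp hc hu (fun y => y) continuous_id
    rw [this, MeasureTheory.integral_Icc_eq_integral_Ioc,
      ← intervalIntegral.integral_of_le (by linarith : -c ≤ c), integral_id]
    ring
  have hEu2 : ∫ ω, (u ω) ^ 2 ∂μ = c ^ 2 / 3 := by
    have := unif_integral_comp hc hu (fun y => y ^ 2) (continuous_pow 2)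
    rw [this, MeasureTheory.integral_Icc_eq_integral_Ioc,
      ← intervalIntegral.integral_of_le (by linarith : -c ≤ c), integral_pow]
    field_simp
    ring
  have hu_int : Integrable u μ := unif_integrable_comp hc hu (fun y => y) continuous_id
  have hu2_int : Integrable (fun ω => (u ω) ^ 2) μ :=
    unif_integrable_comp hc hu (fun y => y ^ 2) (continuous_pow 2)
  -- integrability of inner products
  have hinner_int : Integrable (fun ω => ⟪g ω, G⟫) μ := hg_int.inner_const G
  have hA_int : Integrable (fun ω => ‖g ω - G‖ ^ 2) μ := by
    have : (fun ω => ‖g ω - G‖ ^ 2) =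
        fun ω => ‖g ω‖ ^ 2 - 2 * ⟪g ω, G⟫ + ‖G‖ ^ 2 := by
      funext ω; exact norm_sub_sq_real _ _
    rw [this]
    exact (hg2_int.sub (hinner_int.const_mul 2)).add (integrable_const _)
  -- Z = ⟪g - G, g⟫
  set Z : Ω → ℝ := fun ω => ⟪g ω - G, g ω⟫ with hZ
  have hZ_eq : Z = fun ω => ‖g ω‖ ^ 2 - ⟪g ω, G⟫ := by
    funext ω
    simp only [hZ]
    rw [inner_sub_left, real_inner_self_eq_norm_sq, real_inner_comm]
  have hZ_int : Integrable Z μ := by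
    rw [hZ_eq]
    exact hg2_int.sub hinner_int
  -- independence consequences
  have hindepZ : IndepFun u Z μ := by
    have : Measurable fun (y : EuclideanSpace ℝ (Fin d)) => ⟪y - G, y⟫ := by
      apply Continuous.measurable
      exact (continuous_id.sub continuous_const).inner continuous_id
    exact hindep.comp measurable_id this
  have hEuZ : ∫ ω, u ω * Z ω ∂μ = 0 := by
    rw [IndepFun.integral_fun_mul_eq_mul_integral hindepZ hu_int.1 hZ_int.1, hEu, zero_mul]
  have huZ_int : Integrable (fun ω => u ω * Z ω) μ := hindepZ.integrable_mul hu_int hZ_int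
  have hindep2 : IndepFun (fun ω => (u ω) ^ 2) (fun ω => ‖g ω‖ ^ 2) μ := by
    have h1 : Measurable fun (y : ℝ) => y ^ 2 := (continuous_pow 2).measurable
    have h2 : Measurable fun (y : EuclideanSpace ℝ (Fin d)) => ‖y‖ ^ 2 :=
      (continuous_norm.pow 2).measurable
    exact hindep.comp h1 h2
  have hEu2g2 : ∫ ω, (u ω) ^ 2 * ‖g ω‖ ^ 2 ∂μ = (c ^ 2 / 3) * ∫ ω, ‖g ω‖ ^ 2 ∂μ := by
    rw [IndepFun.integral_fun_mul_eq_mul_integral hindep2 hu2_int.1 hg2_int.1, hEu2]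
  have hu2g2_int : Integrable (fun ω => (u ω) ^ 2 * ‖g ω‖ ^ 2) μ :=
    hindep2.integrable_mul hu2_int hg2_int
  -- E‖g‖² = E‖g-G‖² + ‖G‖²
  have hEg2 : ∫ ω, ‖g ω‖ ^ 2 ∂μ = (∫ ω, ‖g ω - G‖ ^ 2 ∂μ) + ‖G‖ ^ 2 := by
    have hexp : (fun ω => ‖g ω - G‖ ^ 2) =
        fun ω => ‖g ω‖ ^ 2 - 2 * ⟪g ω, G⟫ + ‖G‖ ^ 2 := by
      funext ω; exact norm_sub_sq_real _ _
    have hinner_val : ∫ ω, ⟪g ω, G⟫ ∂μ = ‖G‖ ^ 2 := by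
      have h1 : ∫ ω, ⟪G, g ω⟫ ∂μ = ⟪G, ∫ ω, g ω ∂μ⟫ := integral_inner hg_int G
      have h2 : ∀ ω, ⟪g ω, G⟫ = ⟪G, g ω⟫ := fun ω => real_inner_comm _ _
      simp_rw [h2]
      rw [h1, hg_mean]
      exact real_inner_self_eq_norm_sq G
    have i2 : Integrable (fun ω => 2 * ⟪g ω, G⟫) μ := hinner_int.const_mul 2
    have i1 : Integrable (fun ω => ‖g ω‖ ^ 2 - 2 * ⟪g ω, G⟫) μ := hg2_int.sub i2
    rw [hexp, integral_add i1 (integrable_const _),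
      integral_sub hg2_int i2, integral_const_mul, hinner_val]
    simp
    ring
  -- pointwise expansion
  have hpt : ∀ ω, ‖ηc • g ω - ηc • G + u ω • g ω‖ ^ 2 =
      ηc ^ 2 * ‖g ω - G‖ ^ 2 + 2 * ηc * (u ω * Z ω) + (u ω) ^ 2 * ‖g ω‖ ^ 2 := by
    intro ω
    rw [← smul_sub, norm_add_sq_real, norm_smul, norm_smul,
      real_inner_smul_left, real_inner_smul_right]
    simp only [Real.norm_eq_abs, mul_pow, sq_abs, hZ]
    ring
  -- compute the integral
  have hsplit : ∫ ω, ‖ηc • g ω - ηc • G + u ω • g ω‖ ^ 2 ∂μ =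
      ηc ^ 2 * (∫ ω, ‖g ω - G‖ ^ 2 ∂μ) + (c ^ 2 / 3) * (∫ ω, ‖g ω - G‖ ^ 2 ∂μ + ‖G‖ ^ 2) := by
    simp_rw [hpt]
    have i3 : Integrable (fun ω => ηc ^ 2 * ‖g ω - G‖ ^ 2) μ := hA_int.const_mul _
    have i4 : Integrable (fun ω => 2 * ηc * (u ω * Z ω)) μ := huZ_int.const_mul _
    have i5 : Integrable (fun ω => ηc ^ 2 * ‖g ω - G‖ ^ 2 + 2 * ηc * (u ω * Z ω)) μ := i3.add i4
    rw [integral_add i5 hu2g2_int, integral_add i3 i4,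
      integral_const_mul, integral_const_mul, hEuZ, hEu2g2, hEg2]
    ring
  rw [hsplit]
  have hA_le : ∫ ω, ‖g ω - G‖ ^ 2 ∂μ ≤ σ ^ 2 := hσ
  have hc2 : c ^ 2 / 3 = (Lmax - Lmin) ^ 2 / 12 := by rw [hcdef]; ring
  have h1 : ηc ^ 2 * (∫ ω, ‖g ω - G‖ ^ 2 ∂μ) ≤ ηc ^ 2 * σ ^ 2 :=
    mul_le_mul_of_nonneg_left hA_le (sq_nonneg _)
  have h2 : (c ^ 2 / 3) * (∫ ω, ‖g ω - G‖ ^ 2 ∂μ + ‖G‖ ^ 2) ≤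
      (c ^ 2 / 3) * (σ ^ 2 + ‖G‖ ^ 2) := by
    apply mul_le_mul_of_nonneg_left _ (by positivity)
    linarith
  calc ηc ^ 2 * (∫ ω, ‖g ω - G‖ ^ 2 ∂μ) + (c ^ 2 / 3) * (∫ ω, ‖g ω - G‖ ^ 2 ∂μ + ‖G‖ ^ 2)
      ≤ ηc ^ 2 * σ ^ 2 + (c ^ 2 / 3) * (σ ^ 2 + ‖G‖ ^ 2) := by linarith
    _ = ηc ^ 2 * σ ^ 2 + (Lmax - Lmin) ^ 2 * σ ^ 2 / 12
        + (Lmax - Lmin) ^ 2 * ‖G‖ ^ 2 / 12 := by rw [hc2]; ring
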